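/- Let 0 < α < 2, a ≠ 0, γ ∈ ℝ, and let E₁, E₂ > 0 with E₁ ≠ E₂, and let σ ∈ {+1, -1}. Then there exist constants ε > 0, C > 0 and ξ* ≥ 1 such that for all ξ > ξ₀ > ξ*, |∫_{ξ₀}^{ξ} sin( a ∫₀^{s} √(1 - β_{E₁}(x)) dx + σ a ∫₀^{s} √(1 - β_{E₂}(x)) dx + γ ) / s ds| ≤ C ξ₀^{-ε}. -/

import Mathlib

open Filter Set

open MeasureTheory

lemma aux_sqrt_one_add_le (u : ℝ) (hu : 0 ≤ u) :
    Real.sqrt (1 + u) ≤ 1 + Real.sqrt u := by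
  have h : (1 + u) ≤ (1 + Real.sqrt u) ^ 2 := by
    nlinarith [Real.sq_sqrt hu, Real.sqrt_nonneg u]
  calc Real.sqrt (1 + u) ≤ Real.sqrt ((1 + Real.sqrt u) ^ 2) := Real.sqrt_le_sqrt h
    _ = 1 + Real.sqrt u := Real.sqrt_sq (by positivity)

lemma aux_Wmono (p u₁ u₂ : ℝ) (hp : p < 1) (hu₂ : 0 < u₂) (h : u₂ < u₁) :
    (2 + (2 - p) * u₂) / (2 * Real.sqrt (1 + u₂))
      < (2 + (2 - p) * u₁) / (2 * Real.sqrt (1 + u₁)) := by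
  have hu₁ : 0 < u₁ := lt_trans hu₂ h
  have hg₁ : 0 < Real.sqrt (1 + u₁) := Real.sqrt_pos.2 (by linarith)
  have hg₂ : 0 < Real.sqrt (1 + u₂) := Real.sqrt_pos.2 (by linarith)
  have hsq₁ : Real.sqrt (1 + u₁) ^ 2 = 1 + u₁ := Real.sq_sqrt (by linarith)
  have hsq₂ : Real.sqrt (1 + u₂) ^ 2 = 1 + u₂ := Real.sq_sqrt (by linarith)
  rw [div_lt_div_iff₀ (by positivity) (by positivity)]
  set g₁ := Real.sqrt (1 + u₁)
  set g₂ := Real.sqrt (1 + u₂)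
  have hX : 0 < 2 + (2 - p) * u₁ := by nlinarith
  have hY : 0 < 2 + (2 - p) * u₂ := by nlinarith
  have key : ((2 + (2 - p) * u₁) * (2 * g₂)) ^ 2 - ((2 + (2 - p) * u₂) * (2 * g₁)) ^ 2 > 0 := by
    have expand : ((2 + (2 - p) * u₁) * (2 * g₂)) ^ 2 - ((2 + (2 - p) * u₂) * (2 * g₁)) ^ 2
        = (2 + (2 - p) * u₁) ^ 2 * 4 * (1 + u₂) - (2 + (2 - p) * u₂) ^ 2 * 4 * (1 + u₁) := by
      rw [mul_pow, mul_pow, mul_pow, mul_pow, hsq₁, hsq₂]; ring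
    rw [expand]
    have expand2 : (2 + (2 - p) * u₁) ^ 2 * 4 * (1 + u₂) - (2 + (2 - p) * u₂) ^ 2 * 4 * (1 + u₁)
        = 4 * (u₁ - u₂) * (4 * ((2 - p) - 1) + (2 - p) ^ 2 * (u₁ + u₂) + (2 - p) ^ 2 * (u₁ * u₂)) := by
      ring
    rw [expand2]
    have h1 : 0 < (2 - p) - 1 := by linarith
    have h2 : (0:ℝ) ≤ (2 - p) ^ 2 * (u₁ + u₂) := by positivity
    have h3 : (0:ℝ) ≤ (2 - p) ^ 2 * (u₁ * u₂) := by positivity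
    have h4 : 0 < u₁ - u₂ := sub_pos.2 h
    nlinarith [mul_pos h4 h1]
  nlinarith [mul_pos hY (mul_pos (by norm_num : (0:ℝ) < 2) hg₁),
    mul_pos hX (mul_pos (by norm_num : (0:ℝ) < 2) hg₂), key]

lemma osc_bound (φ ψ k' : ℝ → ℝ) (ξ₀ ξ : ℝ) (h0 : 0 < ξ₀) (hle : ξ₀ ≤ ξ)
    (hφ : ∀ s ∈ Icc ξ₀ ξ, HasDerivAt φ (ψ s) s)
    (hk : ∀ s ∈ Icc ξ₀ ξ, HasDerivAt (fun t => t * ψ t) (k' s) s)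
    (hψc : ContinuousOn ψ (Icc ξ₀ ξ)) (hk'c : ContinuousOn k' (Icc ξ₀ ξ))
    (K : ℝ) (hK : 0 < K) (hKle : ∀ s ∈ Icc ξ₀ ξ, K ≤ |s * ψ s|)
    (hsign : (∀ s ∈ Icc ξ₀ ξ, 0 ≤ k' s) ∨ (∀ s ∈ Icc ξ₀ ξ, k' s ≤ 0)) :
    |∫ s in ξ₀..ξ, Real.sin (φ s) / s| ≤ 4 / K := by
  have huIcc : uIcc ξ₀ ξ = Icc ξ₀ ξ := uIcc_of_le hle
  set k : ℝ → ℝ := fun s => s * ψ s with hkdef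
  have hknz : ∀ s ∈ Icc ξ₀ ξ, k s ≠ 0 := by
    intro s hs
    have := hKle s hs
    intro h
    rw [hkdef] at h
    simp only [h, abs_zero] at this
    linarith
  set h : ℝ → ℝ := fun s => (k s)⁻¹ with hhdef
  set h' : ℝ → ℝ := fun s => -k' s / (k s) ^ 2 with hh'def
  have hh : ∀ s ∈ Icc ξ₀ ξ, HasDerivAt h (h' s) s := fun s hs =>
    (hk s hs).inv (hknz s hs)
  have hφcont : ContinuousOn φ (Icc ξ₀ ξ) := fun s hs =>
    (hφ s hs).continuousAt.continuousWithinAt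
  set v : ℝ → ℝ := fun s => -Real.cos (φ s) with hvdef
  set v' : ℝ → ℝ := fun s => Real.sin (φ s) * ψ s with hv'def
  have hv : ∀ s ∈ Icc ξ₀ ξ, HasDerivAt v (v' s) s := by
    intro s hs
    have := ((hφ s hs).cos).neg
    exact this.congr_deriv (by ring)
  have hkcont : ContinuousOn k (Icc ξ₀ ξ) := continuousOn_id.mul hψc
  have hhcont : ContinuousOn h (Icc ξ₀ ξ) := hkcont.inv₀ hknz
  have hh'cont : ContinuousOn h' (Icc ξ₀ ξ) :=
    (hk'c.neg).div (hkcont.pow 2) (fun s hs => pow_ne_zero 2 (hknz s hs))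
  have hh'int : IntervalIntegrable h' volume ξ₀ ξ := by
    apply ContinuousOn.intervalIntegrable; rwa [huIcc]
  have hv'int : IntervalIntegrable v' volume ξ₀ ξ := by
    apply ContinuousOn.intervalIntegrable
    rw [huIcc]
    exact ((Real.continuous_sin.comp_continuousOn hφcont).mul hψc)
  -- rewrite integrand
  have hcongr : ∫ s in ξ₀..ξ, Real.sin (φ s) / s = ∫ s in ξ₀..ξ, h s * v' s := by
    apply intervalIntegral.integral_congr
    intro s hs
    rw [huIcc] at hs
    have hs0 : s ≠ 0 := by have := hs.1; intro h; linarith [h ▸ this]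
    have hψ0 : ψ s ≠ 0 := by
      intro h
      apply hknz s hs
      simp [hkdef, h]
    simp only [hhdef, hv'def, hkdef]
    field_simp
  have hibp : ∫ s in ξ₀..ξ, h s * v' s =
      h ξ * v ξ - h ξ₀ * v ξ₀ - ∫ s in ξ₀..ξ, h' s * v s := by
    apply intervalIntegral.integral_mul_deriv_eq_deriv_mul
    · intro x hx; rw [huIcc] at hx; exact hh x hx
    · intro x hx; rw [huIcc] at hx; exact hv x hx
    · exact hh'int
    · exact hv'int
  have hbound : ∀ s ∈ Icc ξ₀ ξ, |h s| ≤ 1 / K := by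
    intro s hs
    have h1 : K ≤ |k s| := hKle s hs
    rw [hhdef]
    simp only [abs_inv]
    rw [one_div]
    exact inv_anti₀ hK h1
  have hvbound : ∀ s, |v s| ≤ 1 := by
    intro s; simp only [hvdef, abs_neg]; exact Real.abs_cos_le_one _
  -- ∫ h' = h ξ - h ξ₀
  have hfund : ∫ s in ξ₀..ξ, h' s = h ξ - h ξ₀ := by
    apply intervalIntegral.integral_eq_sub_of_hasDerivAt
    · intro x hx; rw [huIcc] at hx; exact hh x hx
    · exact hh'int
  have hendpts : ξ ∈ Icc ξ₀ ξ := ⟨hle, le_refl ξ⟩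
  have hendpts0 : ξ₀ ∈ Icc ξ₀ ξ := ⟨le_refl ξ₀, hle⟩
  have habs_int : ∫ s in ξ₀..ξ, |h' s| ≤ 2 / K := by
    have heq : ∫ s in ξ₀..ξ, |h' s| = |h ξ - h ξ₀| := by
      rcases hsign with hpos | hneg
      · -- k' ≥ 0 so h' ≤ 0
        have : ∀ s ∈ uIcc ξ₀ ξ, |h' s| = -h' s := by
          intro s hs
          rw [huIcc] at hs
          apply abs_of_nonpos
          rw [hh'def]
          apply div_nonpos_of_nonpos_of_nonneg
          · linarith [hpos s hs]
          · positivity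
        have hd : h ξ - h ξ₀ ≤ 0 := by
          have h2 : 0 ≤ ∫ s in ξ₀..ξ, -h' s := by
            apply intervalIntegral.integral_nonneg hle
            intro u hu
            rw [hh'def]
            simp only [neg_div, neg_neg]
            exact div_nonneg (hpos u hu) (by positivity)
          rw [intervalIntegral.integral_neg, hfund] at h2
          linarith
        rw [intervalIntegral.integral_congr this, intervalIntegral.integral_neg, hfund, abs_of_nonpos hd]
      · have : ∀ s ∈ uIcc ξ₀ ξ, |h' s| = h' s := by
          intro s hs
          rw [huIcc] at hs
          apply abs_of_nonneg
          rw [hh'def]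
          apply div_nonneg
          · linarith [hneg s hs]
          · positivity
        have hd : 0 ≤ h ξ - h ξ₀ := by
          rw [← hfund]
          apply intervalIntegral.integral_nonneg hle
          intro u hu
          rw [hh'def]
          apply div_nonneg
          · linarith [hneg u hu]
          · positivity
        rw [intervalIntegral.integral_congr this, hfund, abs_of_nonneg hd]
    rw [heq]
    calc |h ξ - h ξ₀| ≤ |h ξ| + |h ξ₀| := abs_sub _ _
      _ ≤ 1 / K + 1 / K := add_le_add (hbound ξ hendpts) (hbound ξ₀ hendpts0)
      _ = 2 / K := by ring
  have hlast : |∫ s in ξ₀..ξ, h' s * v s| ≤ 2 / K := by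
    calc |∫ s in ξ₀..ξ, h' s * v s| ≤ ∫ s in ξ₀..ξ, |h' s * v s| :=
          intervalIntegral.abs_integral_le_integral_abs hle
      _ ≤ ∫ s in ξ₀..ξ, |h' s| := by
          apply intervalIntegral.integral_mono_on hle
          · apply ContinuousOn.intervalIntegrable
            rw [huIcc]
            exact (hh'cont.mul ((Real.continuous_cos.comp_continuousOn hφcont).neg)).abs
          · exact hh'int.abs
          · intro s hs
            rw [abs_mul]
            calc |h' s| * |v s| ≤ |h' s| * 1 :=
                  mul_le_mul_of_nonneg_left (hvbound s) (abs_nonneg _)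
              _ = |h' s| := mul_one _
      _ ≤ 2 / K := habs_int
  rw [hcongr, hibp]
  have e1 : |h ξ * v ξ| ≤ 1 / K := by
    rw [abs_mul]
    calc |h ξ| * |v ξ| ≤ (1/K) * 1 :=
      mul_le_mul (hbound ξ hendpts) (hvbound ξ) (abs_nonneg _) (by positivity)
    _ = 1 / K := mul_one _
  have e0 : |h ξ₀ * v ξ₀| ≤ 1 / K := by
    rw [abs_mul]
    calc |h ξ₀| * |v ξ₀| ≤ (1/K) * 1 :=
      mul_le_mul (hbound ξ₀ hendpts0) (hvbound ξ₀) (abs_nonneg _) (by positivity)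
    _ = 1 / K := mul_one _
  calc |h ξ * v ξ - h ξ₀ * v ξ₀ - ∫ s in ξ₀..ξ, h' s * v s|
      ≤ |h ξ * v ξ - h ξ₀ * v ξ₀| + |∫ s in ξ₀..ξ, h' s * v s| := abs_sub _ _
    _ ≤ (|h ξ * v ξ| + |h ξ₀ * v ξ₀|) + |∫ s in ξ₀..ξ, h' s * v s| :=
        add_le_add (abs_sub _ _) le_rfl
    _ ≤ (1/K + 1/K) + 2/K := add_le_add (add_le_add e1 e0) hlast
    _ = 4 / K := by ring

set_option maxHeartbeats 2000000 in
/-- Proposition 2.1, part 2: For `0 < α < 2`, `a ≠ 0`, `γ ∈ ℝ`,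
distinct `E₁, E₂ > 0` and a sign `σ ∈ {+1, -1}`, with `c = (1+α/2)^{2/(2+α)}` and
`β_E(x) = -E/(c^α x^{2α/(2+α)})`, there are `ε > 0`, `C > 0` and `ξ* ≥ 1` such that for all
`ξ > ξ₀ > ξ*`,
`|∫_{ξ₀}^{ξ} sin(a ∫₀^s √(1-β_{E₁}) + σ a ∫₀^s √(1-β_{E₂}) + γ)/s ds| ≤ C ξ₀^{-ε}`. -/
theorem stmt5 (α : ℝ) (hα0 : 0 < α) (hα2 : α < 2)
    (a : ℝ) (ha : a ≠ 0) (γ : ℝ)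
    (E₁ E₂ : ℝ) (hE₁ : 0 < E₁) (hE₂ : 0 < E₂) (hE : E₁ ≠ E₂)
    (σ : ℝ) (hσ : σ = 1 ∨ σ = -1)
    (c : ℝ) (hc : c = (1 + α / 2) ^ ((2 : ℝ) / (2 + α)))
    (β : ℝ → ℝ → ℝ) (hβ : ∀ e x : ℝ, β e x = -e / (c ^ α * x ^ (2 * α / (2 + α)))) :
    ∃ ε > (0 : ℝ), ∃ C > (0 : ℝ), ∃ ξstar : ℝ, 1 ≤ ξstar ∧
      ∀ ξ₀ ξ : ℝ, ξstar < ξ₀ → ξ₀ < ξ →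
        |∫ s in ξ₀..ξ,
            Real.sin (a * (∫ x in (0 : ℝ)..s, Real.sqrt (1 - β E₁ x))
              + σ * a * (∫ x in (0 : ℝ)..s, Real.sqrt (1 - β E₂ x)) + γ) / s|
          ≤ C * ξ₀ ^ (-ε) := by
  have h2α : (0:ℝ) < 2 + α := by linarith
  set p : ℝ := 2 * α / (2 + α) with hpdef
  have hp0 : 0 < p := by rw [hpdef]; positivity
  have hp1 : p < 1 := by rw [hpdef, div_lt_one h2α]; linarith
  have hcpos : 0 < c := by rw [hc]; positivity
  set A : ℝ := c ^ α with hAdef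
  have hA : 0 < A := Real.rpow_pos_of_pos hcpos α
  -- the function g
  set g : ℝ → ℝ → ℝ := fun e s => Real.sqrt (1 + e / A * s ^ (-p)) with hgdef
  have hqpos : ∀ e s : ℝ, 0 < e → 0 < s → 0 < e / A * s ^ (-p) := by
    intro e s he hs
    have := Real.rpow_pos_of_pos hs (-p)
    positivity
  have hg1 : ∀ e s : ℝ, 0 < e → 0 < s → 1 ≤ g e s := by
    intro e s he hs
    rw [hgdef]
    have h1 : (1:ℝ) ≤ 1 + e / A * s ^ (-p) := by linarith [hqpos e s he hs]
    calc (1:ℝ) = Real.sqrt 1 := Real.sqrt_one.symm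
      _ ≤ _ := Real.sqrt_le_sqrt h1
  have hgpos : ∀ e s : ℝ, 0 < e → 0 < s → 0 < g e s := fun e s he hs =>
    lt_of_lt_of_le one_pos (hg1 e s he hs)
  have hgsq : ∀ e s : ℝ, 0 < e → 0 < s → g e s ^ 2 = 1 + e / A * s ^ (-p) := by
    intro e s he hs
    rw [hgdef]
    exact Real.sq_sqrt (by linarith [hqpos e s he hs])
  -- f = g on positive reals
  have hfg : ∀ e s : ℝ, 0 < s → Real.sqrt (1 - β e s) = g e s := by
    intro e s hs
    rw [hβ, hgdef]
    congr 1
    rw [Real.rpow_neg hs.le]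
    have hsp : (0:ℝ) < s ^ p := Real.rpow_pos_of_pos hs p
    field_simp
    ring
  -- measurability
  have hmeasf : ∀ e : ℝ, Measurable (fun x => Real.sqrt (1 - β e x)) := by
    intro e
    have : (fun x => Real.sqrt (1 - β e x))
        = fun x => Real.sqrt (1 - (-e / (A * x ^ p))) := by
      funext x; rw [hβ]
    rw [this]
    apply Real.continuous_sqrt.measurable.comp
    exact (measurable_const.div ((measurable_id'.pow_const p).const_mul A)).const_sub 1
  -- interval integrability from 0
  have h_int : ∀ e : ℝ, 0 < e → ∀ s : ℝ, 0 < s →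
      IntervalIntegrable (fun x => Real.sqrt (1 - β e x)) volume 0 s := by
    intro e he s hs
    have hexp : (-1:ℝ) < -p / 2 := by linarith
    have hG : IntervalIntegrable (fun x : ℝ => 1 + Real.sqrt (e / A) * x ^ (-p / 2))
        volume 0 s :=
      intervalIntegrable_const.add
        ((intervalIntegral.intervalIntegrable_rpow' hexp).const_mul _)
    apply hG.mono_fun ((hmeasf e).aestronglyMeasurable)
    filter_upwards [MeasureTheory.ae_restrict_mem measurableSet_uIoc] with x hx
    rw [uIoc_of_le hs.le] at hx
    have hx0 : 0 < x := hx.1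
    have hxp : 0 < x ^ (-p) := Real.rpow_pos_of_pos hx0 (-p)
    have hxp2 : 0 < x ^ (-p / 2) := Real.rpow_pos_of_pos hx0 (-p / 2)
    have hu : 0 ≤ e / A * x ^ (-p) := (hqpos e x he hx0).le
    have hsqrtu : Real.sqrt (e / A * x ^ (-p)) = Real.sqrt (e / A) * x ^ (-p / 2) := by
      rw [Real.sqrt_mul (by positivity) _]
      congr 1
      have : x ^ (-p) = (x ^ (-p / 2)) ^ 2 := by
        rw [← Real.rpow_natCast (x ^ (-p / 2)) 2, ← Real.rpow_mul hx0.le]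
        norm_num
      rw [this, Real.sqrt_sq hxp2.le]
    have hb : Real.sqrt (1 - β e x) ≤ 1 + Real.sqrt (e / A) * x ^ (-p / 2) := by
      rw [hfg e x hx0, hgdef]
      calc Real.sqrt (1 + e / A * x ^ (-p))
          ≤ 1 + Real.sqrt (e / A * x ^ (-p)) := aux_sqrt_one_add_le _ hu
        _ = 1 + Real.sqrt (e / A) * x ^ (-p / 2) := by rw [hsqrtu]
    rw [Real.norm_eq_abs, Real.norm_eq_abs, abs_of_nonneg (Real.sqrt_nonneg _),
      abs_of_nonneg (by positivity)]
    exact hb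
  -- FTC
  have hF : ∀ e : ℝ, 0 < e → ∀ s : ℝ, 0 < s →
      HasDerivAt (fun t => ∫ x in (0:ℝ)..t, Real.sqrt (1 - β e x)) (g e s) s := by
    intro e he s hs
    have hcontat : ContinuousAt (fun x => Real.sqrt (1 - β e x)) s := by
      have heq : (fun x => Real.sqrt (1 - β e x))
          = fun x => Real.sqrt (1 - (-e / (A * x ^ p))) := by
        funext x; rw [hβ]
      rw [heq]
      apply Real.continuous_sqrt.continuousAt.comp
      apply ContinuousAt.sub continuousAt_const
      apply ContinuousAt.div continuousAt_const
      · exact (Real.continuousAt_rpow_const s p (Or.inl hs.ne')).const_mul A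
      · have : (0:ℝ) < s ^ p := Real.rpow_pos_of_pos hs p
        positivity
    have h1 := intervalIntegral.integral_hasDerivAt_right (h_int e he s hs)
      ⟨univ, Filter.univ_mem, ((hmeasf e).aestronglyMeasurable).restrict⟩ hcontat
    rwa [hfg e s hs] at h1
  -- derivative of g
  set gd : ℝ → ℝ → ℝ := fun e s => e / A * (-p * s ^ (-p - 1)) / (2 * g e s) with hgddef
  have hgderiv : ∀ e : ℝ, 0 < e → ∀ s : ℝ, 0 < s → HasDerivAt (g e) (gd e s) s := by
    intro e he s hs
    have h1 : HasDerivAt (fun t : ℝ => t ^ (-p)) (-p * s ^ (-p - 1)) s :=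
      Real.hasDerivAt_rpow_const (Or.inl hs.ne')
    have h2 : HasDerivAt (fun t : ℝ => 1 + e / A * t ^ (-p))
        (e / A * (-p * s ^ (-p - 1))) s := (h1.const_mul _).const_add 1
    exact h2.sqrt (by linarith [hqpos e s he hs])
  -- ψ, its derivative, and k'
  set ψ : ℝ → ℝ := fun s => a * g E₁ s + σ * a * g E₂ s with hψdef
  set ψd : ℝ → ℝ := fun s => a * gd E₁ s + σ * a * gd E₂ s with hψddef
  have hψderiv : ∀ s : ℝ, 0 < s → HasDerivAt ψ (ψd s) s := fun s hs =>
    ((hgderiv E₁ hE₁ s hs).const_mul a).add ((hgderiv E₂ hE₂ s hs).const_mul (σ * a))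
  set k' : ℝ → ℝ := fun s => ψ s + s * ψd s with hk'def
  have hkderiv : ∀ s : ℝ, 0 < s → HasDerivAt (fun t => t * ψ t) (k' s) s := by
    intro s hs
    have := (hasDerivAt_id s).mul (hψderiv s hs)
    rw [one_mul] at this
    exact this
  -- the W function and formula
  set W : ℝ → ℝ → ℝ := fun e s => (2 + (2 - p) * (e / A * s ^ (-p))) / (2 * g e s)
    with hWdef
  have hWformula : ∀ e : ℝ, 0 < e → ∀ s : ℝ, 0 < s → g e s + s * gd e s = W e s := by
    intro e he s hs
    have hgne : g e s ≠ 0 := (hgpos e s he hs).ne'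
    have hsq := hgsq e s he hs
    have hs1 : s ^ (-p - 1) * s = s ^ (-p) := by
      rw [← Real.rpow_add_one hs.ne' (-p - 1)]
      norm_num
    simp only [hWdef, hgddef]
    have hgp := hgpos e s he hs
    have h2g : (2 : ℝ) * g e s ≠ 0 := by positivity
    rw [eq_div_iff h2g]
    have hexp : (g e s + s * (e / A * (-p * s ^ (-p - 1)) / (2 * g e s))) * (2 * g e s)
        = 2 * g e s ^ 2 + e / A * (-p) * (s ^ (-p - 1) * s) := by
      field_simp
    rw [hexp, hsq, hs1]
    ring
  have hWpos : ∀ e : ℝ, 0 < e → ∀ s : ℝ, 0 < s → 0 < W e s := by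
    intro e he s hs
    simp only [hWdef]
    have h1 := hqpos e s he hs
    have h2 := hgpos e s he hs
    have h3 : 0 < 2 + (2 - p) * (e / A * s ^ (-p)) := by nlinarith
    positivity
  have hk'eq : ∀ s : ℝ, 0 < s → k' s = a * (W E₁ s + σ * W E₂ s) := by
    intro s hs
    rw [hk'def, hψdef, hψddef, ← hWformula E₁ hE₁ s hs, ← hWformula E₂ hE₂ s hs]
    ring
  -- constants
  set G : ℝ := Real.sqrt (1 + E₁ / A) + Real.sqrt (1 + E₂ / A) with hGdef
  have hGpos : 0 < G := by
    rw [hGdef]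
    have h1 : (0:ℝ) < 1 + E₁ / A := by positivity
    have := Real.sqrt_pos.2 h1
    positivity
  set c₀ : ℝ := min |a| (|a| * |E₁ - E₂| / (A * G)) with hc₀def
  have habs : 0 < |a| := abs_pos.2 ha
  have habsE : 0 < |E₁ - E₂| := abs_pos.2 (sub_ne_zero.2 hE)
  have hc₀ : 0 < c₀ := lt_min habs (by positivity)
  refine ⟨1 - p, by linarith, 4 / c₀, by positivity, 1, le_refl 1, ?_⟩
  intro ξ₀ ξ h1ξ₀ hξ₀ξ
  have h0 : 0 < ξ₀ := lt_trans one_pos h1ξ₀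
  have hIccpos : ∀ s : ℝ, s ∈ Icc ξ₀ ξ → 0 < s := fun s hs => lt_of_lt_of_le h0 hs.1
  have hIcc1 : ∀ s : ℝ, s ∈ Icc ξ₀ ξ → 1 ≤ s := fun s hs => le_trans h1ξ₀.le hs.1
  -- lower bound for |s * ψ s|
  have hK : ∀ s : ℝ, s ∈ Icc ξ₀ ξ → c₀ * ξ₀ ^ (1 - p) ≤ |s * ψ s| := by
    intro s hs
    have hspos := hIccpos s hs
    have hs1 := hIcc1 s hs
    have hrpow_le : ξ₀ ^ (1 - p) ≤ s ^ (1 - p) :=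
      Real.rpow_le_rpow h0.le hs.1 (by linarith)
    have hξ₀pow_le : ξ₀ ^ (1 - p) ≤ ξ₀ := by
      calc ξ₀ ^ (1 - p) ≤ ξ₀ ^ (1:ℝ) :=
            Real.rpow_le_rpow_of_exponent_le h1ξ₀.le (by linarith)
        _ = ξ₀ := Real.rpow_one _
    have hξ₀rpow_pos : 0 < ξ₀ ^ (1 - p) := Real.rpow_pos_of_pos h0 _
    rcases hσ with hσ1 | hσ1
    · -- σ = 1
      have h1 : s * ψ s = a * (s * (g E₁ s + g E₂ s)) := by
        simp only [hψdef, hσ1]; ring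
      have hg1' := hg1 E₁ s hE₁ hspos
      have hg2' := hg1 E₂ s hE₂ hspos
      have h2 : s ≤ s * (g E₁ s + g E₂ s) := by nlinarith
      rw [h1, abs_mul, abs_of_nonneg (by nlinarith : (0:ℝ) ≤ s * (g E₁ s + g E₂ s))]
      have hc₀a : c₀ ≤ |a| := min_le_left _ _
      calc c₀ * ξ₀ ^ (1 - p) ≤ |a| * ξ₀ :=
            mul_le_mul hc₀a hξ₀pow_le hξ₀rpow_pos.le habs.le
        _ ≤ |a| * s := mul_le_mul_of_nonneg_left hs.1 (abs_nonneg a)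
        _ ≤ |a| * (s * (g E₁ s + g E₂ s)) := mul_le_mul_of_nonneg_left h2 (abs_nonneg a)
    · -- σ = -1
      have hgp1 := hgpos E₁ s hE₁ hspos
      have hgp2 := hgpos E₂ s hE₂ hspos
      have hgsum_pos : 0 < g E₁ s + g E₂ s := by linarith
      have hdiff : g E₁ s - g E₂ s = (E₁ - E₂) / A * s ^ (-p) / (g E₁ s + g E₂ s) := by
        rw [eq_div_iff hgsum_pos.ne']
        have h1 := hgsq E₁ s hE₁ hspos
        have h2 := hgsq E₂ s hE₂ hspos
        linear_combination h1 - h2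
      have hss : s * s ^ (-p) = s ^ (1 - p) := by
        nth_rewrite 1 [← Real.rpow_one s]
        rw [← Real.rpow_add hspos, show (1:ℝ) + -p = 1 - p from by ring]
      have h1 : s * ψ s = a * ((E₁ - E₂) / A) * s ^ (1 - p) / (g E₁ s + g E₂ s) := by
        simp only [hψdef, hσ1]
        rw [show a * g E₁ s + -1 * a * g E₂ s = a * (g E₁ s - g E₂ s) from by ring, hdiff,
          ← hss]
        field_simp
      have hgbnd : g E₁ s + g E₂ s ≤ G := by
        rw [hGdef]
        simp only [hgdef]
        have hsple : s ^ (-p) ≤ 1 :=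
          Real.rpow_le_one_of_one_le_of_nonpos hs1 (by linarith)
        have hq1 := hqpos E₁ s hE₁ hspos
        have hq2 := hqpos E₂ s hE₂ hspos
        have hX : 0 < s ^ (-p) := Real.rpow_pos_of_pos hspos _
        have b1 : Real.sqrt (1 + E₁ / A * s ^ (-p)) ≤ Real.sqrt (1 + E₁ / A) := by
          apply Real.sqrt_le_sqrt
          have : 0 < E₁ / A := by positivity
          nlinarith
        have b2 : Real.sqrt (1 + E₂ / A * s ^ (-p)) ≤ Real.sqrt (1 + E₂ / A) := by
          apply Real.sqrt_le_sqrt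
          have : 0 < E₂ / A := by positivity
          nlinarith
        linarith
      have hsrpow_pos : 0 < s ^ (1 - p) := Real.rpow_pos_of_pos hspos _
      have habs_eq : |a * ((E₁ - E₂) / A) * s ^ (1 - p) / (g E₁ s + g E₂ s)|
          = |a| * (|E₁ - E₂| / A) * s ^ (1 - p) / (g E₁ s + g E₂ s) := by
        rw [abs_div, abs_mul, abs_mul, abs_div, abs_of_nonneg hA.le,
          abs_of_nonneg hsrpow_pos.le, abs_of_nonneg hgsum_pos.le]
      rw [h1, habs_eq]
      have hc₀b : c₀ ≤ |a| * |E₁ - E₂| / (A * G) := min_le_right _ _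
      have step1 : ξ₀ ^ (1 - p) / G ≤ s ^ (1 - p) / (g E₁ s + g E₂ s) :=
        div_le_div₀ hsrpow_pos.le hrpow_le hgsum_pos hgbnd
      calc c₀ * ξ₀ ^ (1 - p) ≤ |a| * |E₁ - E₂| / (A * G) * ξ₀ ^ (1 - p) :=
            mul_le_mul_of_nonneg_right hc₀b hξ₀rpow_pos.le
        _ = |a| * (|E₁ - E₂| / A) * (ξ₀ ^ (1 - p) / G) := by
            field_simp
        _ ≤ |a| * (|E₁ - E₂| / A) * (s ^ (1 - p) / (g E₁ s + g E₂ s)) := by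
            apply mul_le_mul_of_nonneg_left step1 (by positivity)
        _ = |a| * (|E₁ - E₂| / A) * s ^ (1 - p) / (g E₁ s + g E₂ s) := by ring
  -- sign of k'
  have hsign : (∀ s ∈ Icc ξ₀ ξ, 0 ≤ k' s) ∨ (∀ s ∈ Icc ξ₀ ξ, k' s ≤ 0) := by
    rcases hσ with hσ1 | hσ1
    · rcases ha.lt_or_gt with ha' | ha'
      · right
        intro s hs
        have hsp := hIccpos s hs
        rw [hk'eq s hsp, hσ1]
        have h1 := hWpos E₁ hE₁ s hsp
        have h2 := hWpos E₂ hE₂ s hsp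
        nlinarith
      · left
        intro s hs
        have hsp := hIccpos s hs
        rw [hk'eq s hsp, hσ1]
        have h1 := hWpos E₁ hE₁ s hsp
        have h2 := hWpos E₂ hE₂ s hsp
        nlinarith
    · have hWcmp : ∀ s : ℝ, 0 < s → (E₁ < E₂ → W E₁ s < W E₂ s) ∧
          (E₂ < E₁ → W E₂ s < W E₁ s) := by
        intro s hsp
        have hX : 0 < s ^ (-p) := Real.rpow_pos_of_pos hsp _
        constructor
        · intro hEE
          have hu : E₁ / A * s ^ (-p) < E₂ / A * s ^ (-p) := by
            apply mul_lt_mul_of_pos_right _ hX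
            have h5 : E₁ * A < E₂ * A := by nlinarith
            exact (div_lt_div_iff₀ hA hA).2 h5
          simp only [hWdef, hgdef]
          exact aux_Wmono p _ _ hp1 (hqpos E₁ s hE₁ hsp) hu
        · intro hEE
          have hu : E₂ / A * s ^ (-p) < E₁ / A * s ^ (-p) := by
            apply mul_lt_mul_of_pos_right _ hX
            have h5 : E₂ * A < E₁ * A := by nlinarith
            exact (div_lt_div_iff₀ hA hA).2 h5
          simp only [hWdef, hgdef]
          exact aux_Wmono p _ _ hp1 (hqpos E₂ s hE₂ hsp) hu
      rcases lt_or_gt_of_ne hE with hEE | hEE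
      · rcases ha.lt_or_gt with ha' | ha'
        · left
          intro s hs
          have hsp := hIccpos s hs
          rw [hk'eq s hsp, hσ1]
          have := (hWcmp s hsp).1 hEE
          nlinarith
        · right
          intro s hs
          have hsp := hIccpos s hs
          rw [hk'eq s hsp, hσ1]
          have := (hWcmp s hsp).1 hEE
          nlinarith
      · rcases ha.lt_or_gt with ha' | ha'
        · right
          intro s hs
          have hsp := hIccpos s hs
          rw [hk'eq s hsp, hσ1]
          have := (hWcmp s hsp).2 hEE
          nlinarith
        · left
          intro s hs
          have hsp := hIccpos s hs
          rw [hk'eq s hsp, hσ1]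
          have := (hWcmp s hsp).2 hEE
          nlinarith
  -- continuity
  have hψc : ContinuousOn ψ (Icc ξ₀ ξ) := fun s hs =>
    (hψderiv s (hIccpos s hs)).continuousAt.continuousWithinAt
  have hgc : ∀ e : ℝ, 0 < e → ContinuousOn (g e) (Icc ξ₀ ξ) := fun e he s hs =>
    (hgderiv e he s (hIccpos s hs)).continuousAt.continuousWithinAt
  have hrpowc : ContinuousOn (fun s : ℝ => s ^ (-p - 1)) (Icc ξ₀ ξ) := fun s hs =>
    (Real.continuousAt_rpow_const s _ (Or.inl (hIccpos s hs).ne')).continuousWithinAt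
  have hgdc : ∀ e : ℝ, 0 < e → ContinuousOn (gd e) (Icc ξ₀ ξ) := by
    intro e he
    simp only [hgddef]
    apply ContinuousOn.div
    · exact continuousOn_const.mul (continuousOn_const.mul hrpowc)
    · exact continuousOn_const.mul (hgc e he)
    · intro s hs
      have := hgpos e s he (hIccpos s hs)
      exact ne_of_gt (by linarith)
  have hψdc : ContinuousOn ψd (Icc ξ₀ ξ) := by
    simp only [hψddef]
    exact (continuousOn_const.mul (hgdc E₁ hE₁)).add (continuousOn_const.mul (hgdc E₂ hE₂))
  have hk'c : ContinuousOn k' (Icc ξ₀ ξ) := by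
    simp only [hk'def]
    exact hψc.add (continuousOn_id.mul hψdc)
  -- apply the oscillation bound
  have hφderiv : ∀ s ∈ Icc ξ₀ ξ, HasDerivAt
      (fun s => a * (∫ x in (0 : ℝ)..s, Real.sqrt (1 - β E₁ x))
        + σ * a * (∫ x in (0 : ℝ)..s, Real.sqrt (1 - β E₂ x)) + γ) (ψ s) s := by
    intro s hs
    have hsp := hIccpos s hs
    exact (((hF E₁ hE₁ s hsp).const_mul a).add ((hF E₂ hE₂ s hsp).const_mul (σ * a))).add_const γ
  have hmain := osc_bound
    (fun s => a * (∫ x in (0 : ℝ)..s, Real.sqrt (1 - β E₁ x))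
      + σ * a * (∫ x in (0 : ℝ)..s, Real.sqrt (1 - β E₂ x)) + γ)
    ψ k' ξ₀ ξ h0 hξ₀ξ.le hφderiv (fun s hs => hkderiv s (hIccpos s hs))
    hψc hk'c (c₀ * ξ₀ ^ (1 - p)) (by positivity) hK hsign
  have hfinal : (4:ℝ) / (c₀ * ξ₀ ^ (1 - p)) = 4 / c₀ * ξ₀ ^ (-(1 - p)) := by
    rw [Real.rpow_neg h0.le]
    field_simp
  rw [← hfinal]
  exact hmain
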